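/- Let X be a k-uniform, union-stable family of subsets of E = ⋃_{X₀∈X} X₀. Suppose E can be constructed by a weakly X-saturated sequence from some Y ⊆ E with |Y| = k and Y ∉ X. Then the matroid U_X (independent sets: all F with |F| ≤ k and F ∉ X) is the unique maximal X-matroid on E, and its rank function equals val_X. -/

import Mathlib

open Set

variable {α : Type*}

/-- `C` is a circuit of `M`: a minimal dependent subset of the ground set. -/
def Matroid.IsCircuit' (M : Matroid α) (C : Set α) : Prop :=
  C ⊆ M.E ∧ ¬ M.Indep C ∧ ∀ e ∈ C, M.Indep (C \ {e})

/-- `M` is an `X`-matroid on `E`: a matroid with ground set `E` in which every member of the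
family `X` is a circuit. -/
def IsXMatroid (E : Set α) (X : Set (Set α)) (M : Matroid α) : Prop :=
  M.E = E ∧ ∀ C ∈ X, M.IsCircuit' C

/-- The union of a list of sets. -/
def unionList (S : List (Set α)) : Set α := ⋃ Y ∈ S, Y

/-- A proper `X`-sequence: a list of members of `X` such that no term is contained in the
union of the preceding terms. -/
def ProperSeq (X : Set (Set α)) (S : List (Set α)) : Prop :=
  (∀ Y ∈ S, Y ∈ X) ∧
  ∀ i : Fin S.length, 0 < i.1 → ¬ (S.get i ⊆ unionList (S.take i.1))

/-- `val(F, S) = |F ∪ ⋃ S| - |S|`. -/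
noncomputable def valSeq (F : Set α) (S : List (Set α)) : ℤ :=
  ((F ∪ unionList S).ncard : ℤ) - S.length

/-- `val_X(F)`: the minimum of `val(F, S)` over all proper `X`-sequences `S`. -/
noncomputable def valX (X : Set (Set α)) (F : Set α) : ℤ :=
  sInf {v : ℤ | ∃ S : List (Set α), ProperSeq X S ∧ v = valSeq F S}

/-- The rank of a set `F` in a matroid `M`: the largest size of an independent subset of `F`. -/
noncomputable def mrk (M : Matroid α) (F : Set α) : ℕ :=
  sSup {n : ℕ | ∃ I ⊆ F, M.Indep I ∧ I.ncard = n}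

/-- The weak order on matroids: `M ⪯ N` iff every independent set of `M` is independent in `N`. -/
def WeakLE (M N : Matroid α) : Prop := ∀ I : Set α, M.Indep I → N.Indep I

/-- A weakly `X`-saturated sequence from `F₀`: a proper `X`-sequence each of whose terms has
exactly one element outside `F₀` and the previous terms. -/
def WeaklySat (X : Set (Set α)) (F₀ : Set α) (S : List (Set α)) : Prop :=
  ProperSeq X S ∧ ∀ i : Fin S.length, (S.get i \ (F₀ ∪ unionList (S.take i.1))).ncard = 1
/-- A `k`-uniform family is union-stable if for all `X₁ X₂ ∈ X` and `e ∈ X₁ ∩ X₂`,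
either `|(X₁ ∪ X₂) - e| > k` or `(X₁ ∪ X₂) - e ∈ X`. -/
def UnionStable (X : Set (Set α)) (k : ℕ) : Prop :=
  ∀ X₁ ∈ X, ∀ X₂ ∈ X, ∀ e ∈ X₁ ∩ X₂,
    k < ((X₁ ∪ X₂) \ {e}).ncard ∨ (X₁ ∪ X₂) \ {e} ∈ X


lemma unionList_nil' : unionList ([] : List (Set α)) = ∅ := by simp [unionList]

lemma mem_unionList {S : List (Set α)} {x : α} : x ∈ unionList S ↔ ∃ Y ∈ S, x ∈ Y := by
  simp [unionList]

lemma unionList_append (S T : List (Set α)) :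
    unionList (S ++ T) = unionList S ∪ unionList T := by
  ext x; simp [mem_unionList, or_and_right, exists_or]

lemma unionList_singleton (C : Set α) : unionList [C] = C := by
  ext x; simp [mem_unionList]

lemma unionList_subset {S : List (Set α)} {B : Set α} (h : ∀ Y ∈ S, Y ⊆ B) :
    unionList S ⊆ B := by
  intro x hx
  obtain ⟨Y, hY, hxY⟩ := mem_unionList.mp hx
  exact h Y hY hxY

lemma properSeq_nil {X : Set (Set α)} : ProperSeq X ([] : List (Set α)) :=
  ⟨by simp, fun i _ => absurd i.2 (by simp)⟩

lemma properSeq_singleton {X : Set (Set α)} {C : Set α} (hC : C ∈ X) :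
    ProperSeq X [C] :=
  ⟨by simpa using hC, fun i hi => by have h2 := i.2; simp only [List.length_singleton] at h2; omega⟩

lemma properSeq_concat {X : Set (Set α)} {T : List (Set α)} {C : Set α}
    (h : ProperSeq X (T ++ [C])) :
    ProperSeq X T ∧ C ∈ X ∧ (0 < T.length → ¬ C ⊆ unionList T) := by
  obtain ⟨h1, h2⟩ := h
  refine ⟨⟨fun Y hY => h1 Y (by simp [hY]), fun i hi => ?_⟩, h1 C (by simp), fun hT hsub => ?_⟩
  · have hlt : i.1 < (T ++ [C]).length := by simp
    have h3 := h2 ⟨i.1, hlt⟩ hi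
    simp only [List.get_eq_getElem] at h3 ⊢
    rwa [List.getElem_append_left i.2, List.take_append_of_le_length i.2.le] at h3
  · have hlt : T.length < (T ++ [C]).length := by simp
    have h3 := h2 ⟨T.length, hlt⟩ hT
    simp only [List.get_eq_getElem] at h3
    rw [List.take_left, List.getElem_concat_length rfl hlt] at h3
    exact h3 hsub

lemma isCircuit'_nonempty {M : Matroid α} {C : Set α} (h : M.IsCircuit' C) : C.Nonempty := by
  rcases C.eq_empty_or_nonempty with rfl | h'
  · exact absurd M.empty_indep h.2.1
  · exact h'

lemma isCircuit'_mem_closure {M : Matroid α} {C : Set α} (h : M.IsCircuit' C) {e : α}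
    (he : e ∈ C) : e ∈ M.closure (C \ {e}) := by
  have hI := h.2.2 e he
  rw [hI.mem_closure_iff]
  left
  rw [insert_diff_singleton, insert_eq_of_mem he]
  exact ⟨h.2.1, h.1⟩

lemma nodup_getElem_not_mem_take {l : List α} (h : l.Nodup) {j n : ℕ} (hj : j < l.length)
    (hn : n ≤ j) : l[j] ∉ l.take n := by
  intro hmem
  obtain ⟨i, hi, hieq⟩ := List.getElem_of_mem hmem
  have hln : i < n ∧ i < l.length := by simp [List.length_take] at hi; omega
  rw [List.getElem_take] at hieq
  have := (h.getElem_inj_iff (hi := hln.2) (hj := hj)).mp hieq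
  omega

lemma getElem_mem_take {l : List α} {j n : ℕ} (hj : j < l.length) (hn : j < n) :
    l[j] ∈ l.take n := by
  have hlt : j < (l.take n).length := by simp [List.length_take]; omega
  have : (l.take n)[j] = l[j] := List.getElem_take
  rw [← this]
  exact List.getElem_mem hlt

lemma mem_take_mono {l : List α} {a : α} {m n : ℕ} (h : m ≤ n) (ha : a ∈ l.take m) :
    a ∈ l.take n := by
  obtain ⟨i, hi, rfl⟩ := List.getElem_of_mem ha
  have hin : i < m ∧ i < l.length := by simp [List.length_take] at hi; omega
  rw [List.getElem_take]
  exact getElem_mem_take hin.2 (by omega)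


lemma basis_ncard_le {M : Matroid α} (hfin : M.E.Finite) {X : Set (Set α)}
    (hX : ∀ C ∈ X, M.IsCircuit' C) (S : List (Set α)) :
    ProperSeq X S → ∀ G, G ⊆ M.E → ∀ J, M.IsBasis J (G ∪ unionList S) →
      J.ncard + S.length ≤ (G ∪ unionList S).ncard := by
  induction S using List.reverseRecOn with
  | nil =>
    intro _ G hG J hJ
    simp only [unionList_nil', union_empty, List.length_nil, Nat.add_zero] at *
    exact ncard_le_ncard hJ.subset (hfin.subset hG)
  | append_singleton T C ih =>
    intro hprop G hG J hJ
    obtain ⟨hT, hCX, hlast⟩ := properSeq_concat hprop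
    have hC := hX C hCX
    have hTE : unionList T ⊆ M.E := unionList_subset fun Z hZ => (hX Z (hT.1 Z hZ)).1
    have hnsub : ¬ C ⊆ unionList T := by
      rcases Nat.eq_zero_or_pos T.length with h0 | h0
      · rw [List.length_eq_zero_iff.mp h0, unionList_nil']
        intro hsub
        obtain ⟨e, he⟩ := isCircuit'_nonempty hC
        exact hsub he
      · exact hlast h0
    obtain ⟨e, heC, heT⟩ := not_subset.mp hnsub
    set A := G ∪ unionList (T ++ [C]) with hA
    have hAeq : A = G ∪ (unionList T ∪ C) := by rw [hA, unionList_append, unionList_singleton]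
    have hAE : A ⊆ M.E := by
      rw [hAeq]
      exact union_subset hG (union_subset hTE hC.1)
    have hAfin : A.Finite := hfin.subset hAE
    have heA : e ∈ A := by rw [hAeq]; exact Or.inr (Or.inr heC)
    have hCA : C \ {e} ⊆ A \ {e} := diff_subset_diff_left (by rw [hAeq]; intro x hx; exact Or.inr (Or.inr hx))
    have hecl : e ∈ M.closure (A \ {e}) :=
      M.closure_mono hCA (isCircuit'_mem_closure hC heC)
    obtain ⟨J', hJ'⟩ := M.exists_isBasis (A \ {e}) (diff_subset.trans hAE)
    have hclA : A ⊆ M.closure (A \ {e}) := by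
      intro x hx
      by_cases hxe : x = e
      · rwa [hxe]
      · exact M.subset_closure (A \ {e}) (diff_subset.trans hAE) ⟨hx, hxe⟩
    have hJ'A : M.IsBasis J' A := by
      refine hJ'.indep.isBasis_of_subset_of_subset_closure (hJ'.subset.trans diff_subset) ?_
      rw [hJ'.closure_eq_closure]
      exact hclA
    have hcard : J.ncard = J'.ncard := by
      have := hJ.encard_eq_encard hJ'A
      rw [Set.ncard_def, Set.ncard_def, this]
    have hset : ((G ∪ C) \ {e}) ∪ unionList T = A \ {e} := by
      rw [hAeq]
      ext x
      simp only [mem_union, mem_diff, mem_singleton_iff]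
      constructor
      · rintro (⟨hx, hne⟩ | hx)
        · exact ⟨by tauto, hne⟩
        · exact ⟨Or.inr (Or.inl hx), fun hxe => heT (hxe ▸ hx)⟩
      · rintro ⟨hx, hne⟩
        rcases hx with hx | hx | hx
        · exact Or.inl ⟨Or.inl hx, hne⟩
        · exact Or.inr hx
        · exact Or.inl ⟨Or.inr hx, hne⟩
    have hih := ih hT ((G ∪ C) \ {e}) (diff_subset.trans (union_subset hG hC.1)) J'
      (by rw [hset]; exact hJ')
    rw [hset] at hih
    have hdiff : (A \ {e}).ncard = A.ncard - 1 := ncard_diff_singleton_of_mem heA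
    have hpos : 0 < A.ncard := (ncard_pos hAfin).mpr ⟨e, heA⟩
    simp only [List.length_append, List.length_singleton]
    omega


section MainProof

theorem weaklySat_unique_maximal_UX (E : Set α) (hE : E.Finite) (X : Set (Set α))
    (hEX : E = (⋃ X₀ ∈ X, X₀)) (k : ℕ) (hk : ∀ Y ∈ X, Y.ncard = k)
    (hstable : UnionStable X k)
    (Y : Set α) (hY : Y ⊆ E) (hYcard : Y.ncard = k) (hYX : Y ∉ X)
    (hsat : ∃ S : List (Set α), WeaklySat X Y S ∧ Y ∪ unionList S = E)
    (U : Matroid α) (hUE : U.E = E)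
    (hUI : ∀ F : Set α, U.Indep F ↔ F ⊆ E ∧ F.ncard ≤ k ∧ F ∉ X) :
    IsXMatroid E X U ∧ (∀ M : Matroid α, IsXMatroid E X M → WeakLE M U) ∧
    ∀ F ⊆ E, (mrk U F : ℤ) = valX X F := by
  classical
  have hXE : ∀ C ∈ X, C ⊆ E := fun C hC x hx => by
    rw [hEX]; exact mem_biUnion hC hx
  have hXfin : ∀ C ∈ X, C.Finite := fun C hC => hE.subset (hXE C hC)
  have hempty : (∅ : Set α) ∉ X := by
    intro h
    have hk0 : k = 0 := by have := hk ∅ h; simpa using this.symm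
    have hYe : Y = ∅ := by
      have hYfin : Y.Finite := hE.subset hY
      rw [← Set.ncard_eq_zero hYfin, hYcard, hk0]
    exact hYX (hYe ▸ h)
  have hXne : ∀ C ∈ X, C.Nonempty := fun C hC =>
    nonempty_iff_ne_empty.mpr (fun h => hempty (h ▸ hC))
  have hk1 : ∀ C ∈ X, 1 ≤ k := by
    intro C hC
    have h1 := hk C hC
    have := (ncard_pos (hXfin C hC)).mpr (hXne C hC)
    omega
  -- Part 1
  have hcirc : ∀ C ∈ X, U.IsCircuit' C := by
    intro C hC
    have hCE := hXE C hC
    have hCfin := hXfin C hC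
    have hCk := hk C hC
    refine ⟨hUE.symm ▸ hCE, fun hI => ((hUI C).mp hI).2.2 hC, fun e he => (hUI _).mpr
      ⟨diff_subset.trans hCE, ?_, ?_⟩⟩
    · rw [ncard_diff_singleton_of_mem he, hCk]; omega
    · intro hmem
      have h2 := hk _ hmem
      rw [ncard_diff_singleton_of_mem he, hCk] at h2
      have := hk1 C hC
      omega
  have part1 : IsXMatroid E X U := ⟨hUE, hcirc⟩
  obtain ⟨W, ⟨hWprop, hWone⟩, hWE⟩ := hsat
  -- Part 2
  have part2 : ∀ M : Matroid α, IsXMatroid E X M → WeakLE M U := by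
    intro M hM I hI
    obtain ⟨hME, hMcirc⟩ := hM
    have hIE : I ⊆ E := hME ▸ hI.subset_ground
    have hInX : I ∉ X := fun h => (hMcirc I h).2.1 hI
    have hYME : Y ⊆ M.E := hME.symm ▸ hY
    have hcl : ∀ n, Y ∪ unionList (W.take n) ⊆ M.closure Y := by
      intro n
      induction n with
      | zero => simpa [unionList_nil'] using M.subset_closure Y hYME
      | succ n ih =>
        rcases le_or_gt W.length n with hn | hn
        · rw [List.take_of_length_le (hn.trans (Nat.le_succ n))]
          rwa [List.take_of_length_le hn] at ih
        · have htake : W.take (n+1) = W.take n ++ [W[n]] := by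
            rw [← List.take_concat_get hn]; simp
          rw [htake, unionList_append, unionList_singleton]
          have hCX : W[n] ∈ X := hWprop.1 _ (List.getElem_mem hn)
          have h1 := hWone ⟨n, hn⟩
          simp only [List.get_eq_getElem] at h1
          obtain ⟨e, he⟩ := ncard_eq_one.mp h1
          have heC : e ∈ W[n] \ (Y ∪ unionList (W.take n)) := he ▸ rfl
          have hsub : W[n] \ {e} ⊆ Y ∪ unionList (W.take n) := by
            intro x hx
            by_contra hx2
            have : x ∈ W[n] \ (Y ∪ unionList (W.take n)) := ⟨hx.1, hx2⟩
            rw [he] at this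
            exact hx.2 this
          have hecl : e ∈ M.closure Y := by
            have h2 := isCircuit'_mem_closure (hMcirc _ hCX) heC.1
            have h3 : M.closure (W[n] \ {e}) ⊆ M.closure Y := by
              calc M.closure (W[n] \ {e}) ⊆ M.closure (M.closure Y) :=
                    M.closure_mono (hsub.trans ih)
                _ = M.closure Y := M.closure_closure Y
            exact h3 h2
          rw [← union_assoc]
          refine union_subset ih ?_
          intro x hx
          by_cases hxe : x = e
          · rwa [hxe]
          · exact ih (hsub ⟨hx, hxe⟩)
    have hEcl : E ⊆ M.closure Y := by
      rw [← hWE]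
      have := hcl W.length
      rwa [List.take_length] at this
    obtain ⟨J, hJ⟩ := M.exists_isBasis Y hYME
    have hIJ : I.encard ≤ J.encard := by
      by_contra hlt
      push_neg at hlt
      obtain ⟨x, hx, hxind⟩ := hJ.indep.augment hI hlt
      have hxcl : x ∈ M.closure J := by
        rw [hJ.closure_eq_closure]
        exact hEcl (hIE hx.1)
      rw [hJ.indep.mem_closure_iff] at hxcl
      rcases hxcl with hdep | hxJ
      · exact hdep.not_indep hxind
      · exact hx.2 hxJ
    have hJk : J.encard ≤ (k : ℕ∞) := by
      refine (encard_mono hJ.subset).trans ?_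
      rw [← (hE.subset hY).cast_ncard_eq, hYcard]
    have hIfin : I.Finite := hE.subset hIE
    have hIk : I.ncard ≤ k := by
      have := hIJ.trans hJk
      rwa [← hIfin.cast_ncard_eq, Nat.cast_le] at this
    exact (hUI I).mpr ⟨hIE, hIk, hInX⟩
  -- cardinality of prefixes of the saturated sequence
  have hWcard : ∀ n, n ≤ W.length → (Y ∪ unionList (W.take n)).ncard = k + n := by
    intro n
    induction n with
    | zero => intro _; simpa [unionList_nil'] using hYcard
    | succ n ih =>
      intro hn
      have hn' : n < W.length := hn
      have htake : W.take (n+1) = W.take n ++ [W[n]] := by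
        rw [← List.take_concat_get hn']; simp
      rw [htake, unionList_append, unionList_singleton, ← union_assoc]
      have h1 := hWone ⟨n, hn'⟩
      simp only [List.get_eq_getElem] at h1
      obtain ⟨e, he⟩ := ncard_eq_one.mp h1
      have heC : e ∈ W[n] \ (Y ∪ unionList (W.take n)) := he ▸ rfl
      have hsub : W[n] \ {e} ⊆ Y ∪ unionList (W.take n) := by
        intro x hx
        by_contra hx2
        have : x ∈ W[n] \ (Y ∪ unionList (W.take n)) := ⟨hx.1, hx2⟩
        rw [he] at this
        exact hx.2 this
      have heq : Y ∪ unionList (W.take n) ∪ W[n] = insert e (Y ∪ unionList (W.take n)) := by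
        ext x
        constructor
        · rintro (hx | hx)
          · exact Or.inr hx
          · by_cases hxe : x = e
            · exact Or.inl hxe
            · exact Or.inr (hsub ⟨hx, hxe⟩)
        · rintro (rfl | hx)
          · exact Or.inr heC.1
          · exact Or.inl hx
      have hfinD : (Y ∪ unionList (W.take n)).Finite := by
        refine hE.subset (union_subset hY (unionList_subset fun Z hZ => hXE Z
          (hWprop.1 Z (List.mem_of_mem_take hZ))))
      rw [heq, ncard_insert_of_notMem heC.2 hfinD, ih hn'.le]
      omega
  have hEcard : E.ncard = k + W.length := by
    have := hWcard W.length le_rfl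
    rwa [List.take_length, hWE] at this
  -- Part 3
  refine ⟨part1, part2, fun F hF => ?_⟩
  have hFfin : F.Finite := hE.subset hF
  set NN := {n : ℕ | ∃ I ⊆ F, U.Indep I ∧ I.ncard = n} with hNN
  have h0 : 0 ∈ NN := ⟨∅, empty_subset F, U.empty_indep, ncard_empty α⟩
  have hub : ∀ n ∈ NN, n ≤ k := by
    rintro n ⟨I, hIF, hind, rfl⟩
    exact ((hUI I).mp hind).2.1
  have hle_mrk : ∀ n ∈ NN, n ≤ mrk U F := fun n hn => le_csSup ⟨k, hub⟩ hn
  have hmrk_mem : mrk U F ∈ NN := Nat.sSup_mem ⟨0, h0⟩ ⟨k, hub⟩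
  have hlower : ∀ S, ProperSeq X S → (mrk U F : ℤ) ≤ valSeq F S := by
    intro S hS
    have hSE : unionList S ⊆ E := unionList_subset fun Z hZ => hXE Z (hS.1 Z hZ)
    have hFS : F ∪ unionList S ⊆ U.E := hUE.symm ▸ union_subset hF hSE
    obtain ⟨I, hIF, hind, hcard⟩ := hmrk_mem
    obtain ⟨J, hJ, hIJ⟩ := hind.subset_isBasis_of_subset (hIF.trans subset_union_left) hFS
    have hJfin : J.Finite := (hE.subset (hUE ▸ hFS)).subset hJ.subset
    have hkey := basis_ncard_le (hUE.symm ▸ hE) hcirc S hS F (hUE.symm ▸ hF) J hJ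
    have hIJ2 : I.ncard ≤ J.ncard := ncard_le_ncard hIJ hJfin
    unfold valSeq
    push_cast
    omega
  have hupper : ∃ S, ProperSeq X S ∧ valSeq F S ≤ (mrk U F : ℤ) := by
    by_cases hF1 : F.ncard ≤ k ∧ F ∉ X
    · refine ⟨[], properSeq_nil, ?_⟩
      have hm : F.ncard ∈ NN := ⟨F, subset_rfl, (hUI F).mpr ⟨hF, hF1.1, hF1.2⟩, rfl⟩
      have := hle_mrk _ hm
      simp only [valSeq, unionList_nil', union_empty, List.length_nil]
      push_cast
      omega
    · by_cases hFX : F ∈ X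
      · refine ⟨[F], properSeq_singleton hFX, ?_⟩
        obtain ⟨f, hf⟩ := hXne F hFX
        have hkF := hk F hFX
        have h1k := hk1 F hFX
        have hm : (k - 1) ∈ NN := by
          refine ⟨F \ {f}, diff_subset, (hUI _).mpr ⟨diff_subset.trans hF, ?_, ?_⟩, ?_⟩
          · rw [ncard_diff_singleton_of_mem hf, hkF]; omega
          · intro hmem
            have := hk _ hmem
            rw [ncard_diff_singleton_of_mem hf, hkF] at this
            omega
          · rw [ncard_diff_singleton_of_mem hf, hkF]
        have := hle_mrk _ hm
        simp only [valSeq, unionList_singleton, union_self, List.length_singleton, hkF]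
        push_cast
        omega
      · have hF2 : F.ncard ≤ k → F ∈ X := by tauto
        have hFk : k < F.ncard := by
          by_contra h
          exact hFX (hF2 (by omega))
        by_cases hCex : ∃ C, C ⊆ F ∧ C.ncard = k ∧ C ∉ X
        · obtain ⟨C, hCF, hCk, hCnX⟩ := hCex
          refine ⟨W, hWprop, ?_⟩
          have hm : k ∈ NN := ⟨C, hCF, (hUI C).mpr ⟨hCF.trans hF, hCk.le, hCnX⟩, hCk⟩
          have hmk := hle_mrk _ hm
          have hsubE : F ∪ unionList W ⊆ E :=
            union_subset hF (unionList_subset fun Z hZ => hXE Z (hWprop.1 Z hZ))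
          have hle : (F ∪ unionList W).ncard ≤ E.ncard := ncard_le_ncard hsubE hE
          unfold valSeq
          push_cast
          omega
        · push_neg at hCex
          have hallX : ∀ C, C ⊆ F → C.ncard = k → C ∈ X := hCex
          have h1k : 1 ≤ k := by
            by_contra h
            have hk0 : k = 0 := by omega
            exact hempty (hallX ∅ (empty_subset F) (by simp [hk0]))
          have hmem : (k - 1) ∈ NN := by
            obtain ⟨I, hIF, hIc⟩ := Set.exists_subset_card_eq (s := F) (n := k-1) (by omega)
            refine ⟨I, hIF, (hUI I).mpr ⟨hIF.trans hF, by omega, ?_⟩, hIc⟩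
            intro hmemX
            have := hk I hmemX
            omega
          have hmk := hle_mrk _ hmem
          set l : List α := hFfin.toFinset.toList with hl
          have hlnd : l.Nodup := Finset.nodup_toList _
          have hlmem : ∀ x, x ∈ l ↔ x ∈ F := by
            intro x; rw [hl, Finset.mem_toList, Set.Finite.mem_toFinset]
          have hllen : l.length = F.ncard := by
            rw [hl, Finset.length_toList]
            exact (Set.ncard_eq_toFinset_card F hFfin).symm
          set P : Set α := {x | x ∈ l.take (k-1)} with hP
          have hPF : P ⊆ F := fun x hx => (hlmem x).mp (List.mem_of_mem_take hx)
          have hPfin : P.Finite := hFfin.subset hPF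
          have htnd : (l.take (k-1)).Nodup := hlnd.sublist (List.take_sublist _ _)
          have hPcard : P.ncard = k - 1 := by
            have hPe : P = ↑(l.take (k-1)).toFinset := by ext x; simp [hP]
            rw [hPe, ncard_coe_finset, List.toFinset_card_of_nodup htnd, List.length_take]
            omega
          have hgetF : ∀ j (hj : j < l.length), l[j] ∈ F :=
            fun j hj => (hlmem _).mp (List.getElem_mem hj)
          set f : α → Set α := fun a => insert a P with hf
          set S0 : List (Set α) := (l.drop (k-1)).map f with hS0
          have hS0len : S0.length = F.ncard - (k-1) := by
            simp [hS0, hllen]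
          have hS0get : ∀ (i : ℕ) (hi : i < S0.length),
              S0[i] = insert (l[k-1+i]'(by rw [hS0len] at hi; omega)) P := by
            intro i hi
            have hi2 : i < (l.drop (k-1)).length := by simpa [hS0] using hi
            simp only [hS0, List.getElem_map, hf]
            congr 1
            exact List.getElem_drop
          have hXmem : ∀ j (hj : j < l.length), k-1 ≤ j → insert (l[j]'hj) P ∈ X := by
            intro j hj hkj
            refine hallX _ (insert_subset (hgetF j hj) hPF) ?_
            have hnP : l[j] ∉ P := nodup_getElem_not_mem_take hlnd hj hkj
            rw [ncard_insert_of_notMem hnP hPfin, hPcard]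
            omega
          have hS0mem : ∀ Z ∈ S0, Z ∈ X := by
            intro Z hZ
            rw [hS0, List.mem_map] at hZ
            obtain ⟨a, ha, rfl⟩ := hZ
            obtain ⟨i, hi, rfl⟩ := List.getElem_of_mem ha
            have hi2 : k-1+i < l.length := by simp at hi; omega
            rw [List.getElem_drop]
            exact hXmem _ hi2 (by omega)
          have htakesub : ∀ n, unionList (S0.take n) ⊆ {x | x ∈ l.take (k-1+n)} := by
            intro n x hx
            obtain ⟨Z, hZ, hxZ⟩ := mem_unionList.mp hx
            rw [hS0, ← List.map_take, List.mem_map] at hZ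
            obtain ⟨a, ha, rfl⟩ := hZ
            obtain ⟨i, hi, rfl⟩ := List.getElem_of_mem ha
            have hin : i < n ∧ k-1+i < l.length := by
              simp [List.length_take] at hi; omega
            rw [List.getElem_take, List.getElem_drop] at hxZ
            simp only [mem_setOf_eq]
            rcases mem_insert_iff.mp hxZ with rfl | hxP
            · exact getElem_mem_take hin.2 (by omega)
            · exact mem_take_mono (by omega) hxP
          have hproper : ProperSeq X S0 := by
            refine ⟨hS0mem, ?_⟩
            intro i hi0
            have hilen : (i:ℕ) < (l.drop (k-1)).length := by simpa [hS0] using i.2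
            have hjlt : k-1+(i:ℕ) < l.length := by simp at hilen; omega
            intro hsub
            have hget : S0.get i = insert (l[k-1+(i:ℕ)]'hjlt) P := by
              simp only [List.get_eq_getElem]; exact hS0get _ i.2
            have hxmem : l[k-1+(i:ℕ)] ∈ unionList (S0.take (i:ℕ)) := by
              apply hsub; rw [hget]; exact mem_insert _ _
            have h5 := htakesub (i:ℕ) hxmem
            exact nodup_getElem_not_mem_take hlnd hjlt (by omega) h5
          refine ⟨S0, hproper, ?_⟩
          have hUF : unionList S0 ⊆ F := by
            intro x hx
            obtain ⟨Z, hZ, hxZ⟩ := mem_unionList.mp hx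
            rw [hS0, List.mem_map] at hZ
            obtain ⟨a, ha, rfl⟩ := hZ
            rcases mem_insert_iff.mp hxZ with rfl | hxP
            · exact (hlmem _).mp (List.mem_of_mem_drop ha)
            · exact hPF hxP
          have hFU : F ∪ unionList S0 = F := union_eq_self_of_subset_right hUF
          unfold valSeq
          rw [hFU, hS0len]
          omega
  obtain ⟨S0, hS0p, hS0v⟩ := hupper
  have hbdd : BddBelow {v : ℤ | ∃ S, ProperSeq X S ∧ v = valSeq F S} :=
    ⟨(mrk U F : ℤ), by rintro v ⟨S, hS, rfl⟩; exact hlower S hS⟩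
  rw [valX]
  refine le_antisymm ?_ ?_
  · exact le_csInf ⟨valSeq F [], ⟨[], ⟨properSeq_nil, rfl⟩⟩⟩
      (by rintro v ⟨S, hS, rfl⟩; exact hlower S hS)
  · exact (csInf_le hbdd ⟨S0, ⟨hS0p, rfl⟩⟩).trans hS0v

end MainProof
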